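/- Let X be an integrable random variable with E[|X−x|] > 0 for all x. Then for each τ ∈ (0,1), the τ-th expectile ξ_τ of X is the τ-th quantile of the distribution function E(x) = 1 − Ē(x), where Ē(x) = E[(X−x) 1{X > x}] / E|X − x|. That is, E(ξ_τ) = τ whenever E is continuous, and more generally ξ_τ solves Ē(θ) = 1 − τ. -/
import Mathlib


open MeasureTheory Filter Topology

/-- Jones's 1994 observation: if `ξ` is the τ-th expectile of `X`, i.e. it
solves `τ E[(X−ξ)1{X>ξ}] = (1−τ) E[(ξ−X)1{X≤ξ}]`, and `E|X−x| > 0` for all `x`, then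
`Ē(ξ) = 1 − τ` where `Ē(x) = E[(X−x)1{X>x}]/E|X−x|`; that is, `ξ` is the τ-th quantile of
the distribution function `E = 1 − Ē`. -/
theorem expectile_is_quantile_of_E {Ω : Type*} [MeasurableSpace Ω] (μ : Measure Ω)
    [IsProbabilityMeasure μ] (X : Ω → ℝ) (hXmeas : Measurable X) (hX : Integrable X μ)
    (hpos : ∀ x : ℝ, 0 < ∫ ω, |X ω - x| ∂μ)
    (τ : ℝ) (hτ : τ ∈ Set.Ioo (0 : ℝ) 1) (ξ : ℝ)
    (hξ : τ * ∫ ω, (if ξ < X ω then X ω - ξ else 0) ∂μ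
        = (1 - τ) * ∫ ω, (if X ω ≤ ξ then ξ - X ω else 0) ∂μ) :
    (∫ ω, (if ξ < X ω then X ω - ξ else 0) ∂μ) / (∫ ω, |X ω - ξ| ∂μ) = 1 - τ := by
  have hint : Integrable (fun ω => X ω - ξ) μ := hX.sub (integrable_const ξ)
  have h1 : Integrable (fun ω => if ξ < X ω then X ω - ξ else 0) μ := by
    have : (fun ω => if ξ < X ω then X ω - ξ else 0) = fun ω => max (X ω - ξ) 0 := by
      funext ω
      rcases le_or_gt (X ω) ξ with h | h
      · simp [not_lt.2 h, max_eq_right (by linarith : X ω - ξ ≤ 0)]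
      · simp [h, max_eq_left (by linarith : (0:ℝ) ≤ X ω - ξ)]
    rw [this]
    exact hint.pos_part
  have h2 : Integrable (fun ω => if X ω ≤ ξ then ξ - X ω else 0) μ := by
    have : (fun ω => if X ω ≤ ξ then ξ - X ω else 0) = fun ω => max (ξ - X ω) 0 := by
      funext ω
      rcases le_or_gt (X ω) ξ with h | h
      · simp [h, max_eq_left (by linarith : (0:ℝ) ≤ ξ - X ω)]
      · simp [not_le.2 h, max_eq_right (by linarith : ξ - X ω ≤ 0)]
    rw [this]
    exact ((integrable_const ξ).sub hX).pos_part
  have hsum : ∫ ω, |X ω - ξ| ∂μ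
      = (∫ ω, (if ξ < X ω then X ω - ξ else 0) ∂μ)
        + ∫ ω, (if X ω ≤ ξ then ξ - X ω else 0) ∂μ := by
    rw [← integral_add h1 h2]
    congr 1
    funext ω
    rcases le_or_gt (X ω) ξ with h | h
    · simp [not_lt.2 h, h, abs_of_nonpos (by linarith : X ω - ξ ≤ 0)]
    · simp [h, not_le.2 h, abs_of_pos (by linarith : (0:ℝ) < X ω - ξ)]
  set A := ∫ ω, (if ξ < X ω then X ω - ξ else 0) ∂μ
  set B := ∫ ω, (if X ω ≤ ξ then ξ - X ω else 0) ∂μ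
  have hAB : (0:ℝ) < A + B := by rw [← hsum]; exact hpos ξ
  rw [hsum]
  field_simp
  nlinarith [hξ]
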